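/- The expected number of F_{q^k}-points on a p-rank 0 Artin-Schreier cover y^p − y = g(x), with g ranging uniformly over polynomials of degree d over F_q (p ∤ d), converges as d → ∞ to q^k + 1 if p ∤ k, and to q^k + 1 + (p−1)q^{k/p} if p | k. -/

import Mathlib

open Finset in
lemma fiber_count {G : Type*} [AddCommGroup G] [Fintype G] {p : ℕ} [Fact p.Prime]
    (f : G →+ ZMod p) (g₁ : G) (hg₁ : f g₁ ≠ 0) (t : ZMod p) :
    p * (Finset.univ.filter fun g => f g = t).card = Fintype.card G := by
  have hsurj : ∀ s : ZMod p, ∃ g : G, f g = s := by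
    intro s
    refine ⟨(s / f g₁).val • g₁, ?_⟩
    rw [map_nsmul, nsmul_eq_mul, ZMod.natCast_val, ZMod.cast_id, div_mul_cancel₀ _ hg₁]
  have hcard : ∀ s : ZMod p, (Finset.univ.filter fun g => f g = s).card
      = (Finset.univ.filter fun g => f g = t).card := by
    intro s
    obtain ⟨g₀, hg₀⟩ := hsurj (t - s)
    apply Finset.card_bij (fun g _ => g + g₀)
    · intro a ha
      simp only [Finset.mem_filter, Finset.mem_univ, true_and] at ha ⊢
      rw [map_add, ha, hg₀]; ring
    · intro a _ b _ h; exact add_right_cancel h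
    · intro b hb
      simp only [Finset.mem_filter, Finset.mem_univ, true_and] at hb ⊢
      exact ⟨b - g₀, by rw [map_sub, hb, hg₀]; ring, by abel⟩
  have h1 := Finset.card_eq_sum_card_fiberwise
    (f := fun g : G => f g) (s := Finset.univ) (t := Finset.univ) (fun x _ => Finset.mem_univ _)
  rw [Finset.card_univ] at h1
  rw [h1, Finset.sum_congr rfl (fun s _ => hcard s), Finset.sum_const, Finset.card_univ,
    ZMod.card, smul_eq_mul]
open Polynomial

lemma poly_equiv {K : Type} [Field K] {d : ℕ} (hd : 0 < d) :
    ∃ E : ({c : K // c ≠ 0} × (Polynomial.degreeLT K d)) ≃ {g : K[X] // g.natDegree = d},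
      ∀ x, (E x).1 = Polynomial.C x.1.1 * Polynomial.X ^ d + (x.2 : K[X]) := by
  have hdeg : ∀ (x : {c : K // c ≠ 0} × (Polynomial.degreeLT K d)),
      (C x.1.1 * X ^ d + (x.2 : K[X])).natDegree = d := by
    rintro ⟨⟨c, hc⟩, h⟩
    have h1 : (h : K[X]).degree < (C c * X ^ d).degree := by
      rw [degree_C_mul_X_pow _ hc]
      exact mem_degreeLT.1 h.2
    apply natDegree_eq_of_degree_eq_some
    rw [degree_add_eq_left_of_degree_lt h1, degree_C_mul_X_pow _ hc]
  set f : ({c : K // c ≠ 0} × (Polynomial.degreeLT K d)) → {g : K[X] // g.natDegree = d} :=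
    fun x => ⟨C x.1.1 * X ^ d + (x.2 : K[X]), hdeg x⟩ with hf
  have hbij : Function.Bijective f := by
    constructor
    · rintro ⟨⟨c, hc⟩, h⟩ ⟨⟨c', hc'⟩, h'⟩ heq
      have hpoly : C c * X ^ d + (h : K[X]) = C c' * X ^ d + (h' : K[X]) :=
        congrArg Subtype.val heq
      have hcoeff := congrArg (fun g : K[X] => g.coeff d) hpoly
      simp only [coeff_add, coeff_C_mul, coeff_X_pow, if_pos rfl, mul_one, if_true,
        coeff_eq_zero_of_degree_lt (mem_degreeLT.1 h.2),
        coeff_eq_zero_of_degree_lt (mem_degreeLT.1 h'.2), add_zero, mul_one] at hcoeff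
      subst hcoeff
      have : (h : K[X]) = (h' : K[X]) := by
        exact add_left_cancel hpoly
      exact Prod.ext rfl (Subtype.ext this)
    · rintro ⟨g, hg⟩
      have hg0 : g ≠ 0 := by
        intro h0; rw [h0, natDegree_zero] at hg; omega
      have hlc : g.coeff d ≠ 0 := by
        rw [← hg]; exact mt leadingCoeff_eq_zero.1 hg0
      have herase : g.eraseLead ∈ degreeLT K d := by
        rw [mem_degreeLT]
        calc g.eraseLead.degree < g.degree := degree_eraseLead_lt hg0
        _ = d := by rw [degree_eq_natDegree hg0, hg]
      refine ⟨⟨⟨g.coeff d, hlc⟩, ⟨g.eraseLead, herase⟩⟩, Subtype.ext ?_⟩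
      show C (g.coeff d) * X ^ d + g.eraseLead = g
      rw [← hg]
      rw [add_comm]
      exact g.eraseLead_add_C_mul_X_pow
  exact ⟨Equiv.ofBijective f hbij, fun x => rfl⟩

lemma trace_pow_all {K L : Type} [Field K] [Field L] [Algebra K L]
    [FiniteDimensional K L] {k : ℕ} (hfr : Module.finrank K L = k) (hk : 0 < k)
    (α : L) (h : ∀ i < k, Algebra.trace K L (α ^ i) = 0) :
    ∀ i : ℕ, Algebra.trace K L (α ^ i) = 0 := by
  intro i
  rcases lt_or_ge i k with hik | hik
  · exact h i hik
  · have hint : IsIntegral K α := Algebra.IsIntegral.isIntegral α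
    have hmonic := minpoly.monic hint
    set P := minpoly K α with hP
    have hdeg : P.natDegree ≤ k := hfr ▸ minpoly.natDegree_le α
    set r := (Polynomial.X ^ i) %ₘ P with hr
    have hrd : r.natDegree < k := by
      have h1 : r.degree < P.degree := Polynomial.degree_modByMonic_lt _ hmonic
      have h2 : P.natDegree ≠ 0 := (minpoly.natDegree_pos hint).ne'
      have h3 : r.natDegree < P.natDegree := by
        rcases eq_or_ne r 0 with h0 | h0
        · rw [h0, Polynomial.natDegree_zero]; omega
        · exact Polynomial.natDegree_lt_natDegree h0 h1
      omega
    have haev : α ^ i = Polynomial.aeval α r := by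
      have hdiv := Polynomial.modByMonic_add_div (Polynomial.X ^ i : Polynomial K) P
      have h4 := congrArg (Polynomial.aeval α) hdiv
      rw [map_add, map_mul, minpoly.aeval, zero_mul, add_zero] at h4
      rw [hr, h4, map_pow, Polynomial.aeval_X]
    rw [haev, Polynomial.aeval_eq_sum_range' (lt_of_lt_of_le hrd (le_refl k) : r.natDegree < k), map_sum]
    refine Finset.sum_eq_zero fun j hj => ?_
    rw [map_smul, h j (Finset.mem_range.1 hj), smul_zero]

open Polynomial
open scoped Classical

-- card of {x : L | x ^ q ^ m = x} = q ^ m  when m ∣ k, 0 < m, card L = q^k, 2 ≤ q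
lemma card_pow_fixed (q m k : ℕ) (hq2 : 2 ≤ q) (hm : 0 < m) (hmk : m ∣ k) (hk : 0 < k)
    (L : Type) [Field L] [Fintype L] (hL : Fintype.card L = q ^ k) :
    (Finset.univ.filter fun x : L => x ^ q ^ m = x).card = q ^ m := by
  set n : ℕ := q ^ m - 1 with hn
  have hqm2 : 2 ≤ q ^ m := le_trans hq2 (Nat.le_self_pow hm.ne' q)
  have hn1 : 0 < n := by omega
  have hNcard : Fintype.card Lˣ = q ^ k - 1 := by
    rw [Fintype.card_units, hL]
  have hdvd : n ∣ q ^ k - 1 := by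
    obtain ⟨t, rfl⟩ := hmk
    have := Nat.sub_dvd_pow_sub_pow (q ^ m) 1 t
    rwa [one_pow, ← pow_mul] at this
  have hN1 : 0 < q ^ k - 1 := by
    have : 2 ≤ q ^ k := le_trans hq2 (Nat.le_self_pow hk.ne' q)
    omega
  -- a primitive n-th root of unity
  obtain ⟨g, hg⟩ := IsCyclic.exists_generator (α := Lˣ)
  have hog : orderOf g = q ^ k - 1 := by
    rw [← hNcard, ← Nat.card_eq_fintype_card]
    exact orderOf_eq_card_of_forall_mem_zpowers hg
  set ζ : Lˣ := g ^ ((q ^ k - 1) / n) with hζ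
  have hoζ : orderOf ζ = n := by
    rw [hζ, orderOf_pow, hog, Nat.gcd_eq_right (Nat.div_dvd_of_dvd hdvd),
      Nat.div_div_self hdvd hN1.ne']
  have hprim : IsPrimitiveRoot ((ζ : L)) n := by
    have := IsPrimitiveRoot.orderOf (ζ : L)
    rwa [orderOf_units, hoζ] at this
  have hset : (Finset.univ.filter fun x : L => x ^ q ^ m = x)
      = insert (0 : L) (nthRootsFinset n (1 : L)) := by
    ext x
    simp only [Finset.mem_filter, Finset.mem_univ, true_and, Finset.mem_insert,
      mem_nthRootsFinset hn1 (1 : L)]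
    constructor
    · intro hx
      rcases eq_or_ne x 0 with h0 | h0
      · exact Or.inl h0
      · right
        have : x ^ n * x = x := by
          rw [← pow_succ, hn]
          have : q ^ m - 1 + 1 = q ^ m := by omega
          rw [this, hx]
        have h2 : (x ^ n - 1) * x = 0 := by rw [sub_mul, one_mul, mul_comm] at *; rw [this]; ring
        rcases mul_eq_zero.1 h2 with h | h
        · have := sub_eq_zero.1 h; exact this
        · exact absurd h h0
    · rintro (rfl | hx)
      · exact zero_pow (by positivity)
      · have : q ^ m = n + 1 := by omega
        rw [this, pow_succ, hx, one_mul]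
  rw [hset, Finset.card_insert_of_notMem, hprim.card_nthRootsFinset]
  · omega
  · intro h0
    have := (mem_nthRootsFinset hn1 (1 : L)).1 h0
    rw [zero_pow hn1.ne'] at this
    exact zero_ne_one this

open scoped Classical in
lemma bad_count (p q k a : ℕ) [Fact p.Prime] (ha : 0 < a) (hqa : q = p ^ a) (hk : 0 < k)
    (K L : Type) [Field K] [Fintype K] [Field L] [Fintype L] [Algebra K L]
    [CharP K p] [CharP L p]
    (hK : Fintype.card K = q) (hL : Fintype.card L = q ^ k) :
    (Finset.univ.filter fun α : L => ∀ i : ℕ, Algebra.trace K L (α ^ i) = 0).card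
      = if p ∣ k then q ^ (k / p) else 0 := by
  have hp := (Fact.out : p.Prime)
  have hq2 : 2 ≤ q := hqa ▸ le_trans hp.two_le (Nat.le_self_pow ha.ne' p)
  have hfinrank : Module.finrank K L = k := by
    have h := Module.card_eq_pow_finrank (K := K) (V := L)
    rw [hK, hL] at h
    exact (Nat.pow_right_injective hq2 h.symm)
  by_cases hpk : p ∣ k
  · rw [if_pos hpk]
    set m := k / p with hm
    have hmk : m ∣ k := Nat.div_dvd_of_dvd hpk
    have hm0 : 0 < m := Nat.div_pos (Nat.le_of_dvd hk hpk) hp.pos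
    have hkm : k = m * p := by rw [hm, Nat.div_mul_cancel hpk]
    have hqm : q ^ m = p ^ (a * m) := by rw [hqa, ← pow_mul]
    have hF : ∀ z : L, z ^ q ^ m = iterateFrobenius L p (a * m) z := fun z => by
      rw [iterateFrobenius_def, ← hqm]
    set M : Subfield L :=
      { carrier := {x : L | x ^ q ^ m = x}
        mul_mem' := fun {x y} hx hy => by
          simp only [Set.mem_setOf_eq, mul_pow] at *; rw [hx, hy]
        one_mem' := one_pow _
        add_mem' := fun {x y} hx hy => by
          simp only [Set.mem_setOf_eq] at *
          rw [hF, map_add, ← hF, ← hF, hx, hy]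
        zero_mem' := zero_pow (by positivity)
        neg_mem' := fun {x} hx => by
          simp only [Set.mem_setOf_eq] at *
          rw [hF, map_neg, ← hF, hx]
        inv_mem' := fun x hx => by
          simp only [Set.mem_setOf_eq] at *
          rw [inv_pow, hx] } with hM
    have hmemM : ∀ x : L, x ∈ M ↔ x ^ q ^ m = x := fun x => Iff.rfl
    haveI : Fintype M := Fintype.ofFinite M
    have hcardM : Fintype.card M = q ^ m := by
      rw [← card_pow_fixed q m k hq2 hm0 hmk hk L hL]
      exact Fintype.card_of_subtype _ (fun x => by
        simp only [Finset.mem_filter, Finset.mem_univ, true_and]; exact (hmemM x).symm)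
    have hmapmem : ∀ c : K, algebraMap K L c ∈ M := fun c => by
      rw [hmemM, ← map_pow]
      congr 1
      rw [← hK]
      exact FiniteField.pow_card_pow m c
    letI : Algebra K M := RingHom.toAlgebra ((algebraMap K L).codRestrict M.toSubring hmapmem)
    haveI : IsScalarTower K M L := IsScalarTower.of_algebraMap_eq (fun c => rfl)
    have hcardL' : Fintype.card L = (q ^ m) ^ (Module.finrank M L) := by
      rw [← hcardM]; exact Module.card_eq_pow_finrank (K := M) (V := L)
    have hfr : Module.finrank M L = p := by
      rw [hL, ← pow_mul] at hcardL'
      have h2 := Nat.pow_right_injective hq2 hcardL'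
      refine Nat.eq_of_mul_eq_mul_left hm0 ?_
      rw [← h2, ← hkm]
    have hsetEq : (Finset.univ.filter fun α : L => ∀ i : ℕ, Algebra.trace K L (α ^ i) = 0)
        = (Finset.univ.filter fun x : L => x ^ q ^ m = x) := by
      ext α
      simp only [Finset.mem_filter, Finset.mem_univ, true_and]
      constructor
      · -- bad ⟹ α ∈ M
        intro hα
        have hint : IsIntegral K α := Algebra.IsIntegral.isIntegral α
        haveI : FiniteDimensional K (IntermediateField.adjoin K {α}) :=
          IntermediateField.adjoin.finiteDimensional hint
        set F := IntermediateField.adjoin K {α} with hFdef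
        set s := Module.finrank K F with hs
        set r := Module.finrank F L with hr
        have hsr : s * r = k := by
          rw [hs, hr, Module.finrank_mul_finrank K F L, hfinrank]
        have htrF : ∀ x : F, Algebra.trace K L (x : L) = 0 := by
          intro x
          have hx : (x : L) ∈ Algebra.adjoin K ({α} : Set L) := by
            rw [← IntermediateField.adjoin_simple_toSubalgebra_of_isAlgebraic hint.isAlgebraic]
            exact x.2
          rw [Algebra.adjoin_singleton_eq_range_aeval] at hx
          obtain ⟨g, hg⟩ := hx
          rw [← hg]
          show Algebra.trace K L (Polynomial.aeval α g) = 0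
          rw [Polynomial.aeval_eq_sum_range, map_sum]
          refine Finset.sum_eq_zero fun j _ => ?_
          rw [map_smul, hα j, smul_zero]
        have hchain : ∀ x : F, Algebra.trace K F (r • x) = 0 := by
          intro x
          have h1 := htrF x
          rw [show (x : L) = algebraMap F L x from rfl,
            ← Algebra.trace_trace (S := F) (algebraMap F L x),
            Algebra.trace_algebraMap] at h1
          exact h1
        haveI : CharP F p := charP_of_injective_algebraMap (algebraMap K F).injective p
        have hpr : p ∣ r := by
          by_contra hpr
          have hrF : (r : F) ≠ 0 := by
            rw [Ne, CharP.cast_eq_zero_iff F p r]; exact hpr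
          obtain ⟨y, hy⟩ := Algebra.trace_surjective K F 1
          have h0 := hchain ((r : F)⁻¹ * y)
          rw [nsmul_eq_mul, ← mul_assoc, mul_inv_cancel₀ hrF, one_mul, hy] at h0
          exact one_ne_zero h0
        obtain ⟨t, ht⟩ := hpr
        have hsm : m = s * t := by
          have : m * p = (s * t) * p := by
            rw [← hkm, ← hsr, ht]; ring
          exact Nat.eq_of_mul_eq_mul_right hp.pos this
        haveI : Fintype F := Fintype.ofFinite F
        have hcardF : Fintype.card F = q ^ s := by
          rw [Module.card_eq_pow_finrank (K := K) (V := F), hK]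
        set α₀ : F := ⟨α, IntermediateField.mem_adjoin_simple_self K α⟩ with hα₀
        have h1 : α₀ ^ q ^ s = α₀ := by
          rw [← hcardF]; exact FiniteField.pow_card α₀
        have h2 : α ^ q ^ s = α := by
          have := congrArg (fun z : F => (z : L)) h1
          simpa using this
        have hiter : ∀ u : ℕ, α ^ q ^ (s * u) = α := by
          intro u; induction u with
          | zero => simp
          | succ u ih =>
            rw [Nat.mul_succ, pow_add, pow_mul, ih, h2]
        rw [hsm]; exact hiter t
      · -- α ∈ M ⟹ bad
        intro hα i
        have hpow : α ^ i ∈ M := pow_mem ((hmemM α).2 hα) i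
        rw [show α ^ i = algebraMap M L (⟨α ^ i, hpow⟩ : M) from rfl,
          ← Algebra.trace_trace (S := M), Algebra.trace_algebraMap, hfr, map_nsmul]
        have : (p : K) = 0 := CharP.cast_eq_zero K p
        rw [nsmul_eq_mul, this, zero_mul]
    rw [hsetEq, card_pow_fixed q m k hq2 hm0 hmk hk L hL]
  · rw [if_neg hpk, Finset.card_eq_zero, Finset.filter_eq_empty_iff]
    intro α _
    push_neg
    refine ⟨0, ?_⟩
    rw [pow_zero, show (1 : L) = algebraMap K L 1 from (map_one _).symm,
      Algebra.trace_algebraMap, hfinrank, nsmul_eq_mul, mul_one]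
    rw [Ne, CharP.cast_eq_zero_iff K p k]
    exact hpk

lemma charP_of_card {K : Type} [Field K] [Fintype K] {p a : ℕ} (hp : p.Prime)
    (ha : 0 < a) (hK : Fintype.card K = p ^ a) : CharP K p := by
  obtain ⟨n, hr, hb⟩ := FiniteField.card K (ringChar K)
  have hpr : p = ringChar K := by
    have hdvd : p ∣ (ringChar K) ^ (n : ℕ) := by
      rw [← hb, hK]; exact dvd_pow_self p ha.ne'
    exact ((Nat.prime_dvd_prime_iff_eq hp hr).1 (hp.dvd_of_dvd_pow hdvd))
  rw [hpr]; exact ringChar.charP K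

open Classical Polynomial in
/-- The expected number of `F_{q^k}`-points on a `p`-rank `0` Artin–Schreier cover
`y^p − y = g(x)`, with `g` uniform over polynomials of degree `d` over `F_q`
(`p ∤ d`), converges as `d → ∞` to `q^k + 1` if `p ∤ k` and to
`q^k + 1 + (p−1)q^{k/p}` if `p | k`. -/
theorem expected_points_rank_zero (p q k : ℕ) (hp : p.Prime) (hodd : Odd p)
    (hq : ∃ a : ℕ, 0 < a ∧ q = p ^ a) (hk : 0 < k)
    (K L : Type) [Field K] [Fintype K] [Field L] [Fintype L] [Algebra K L]
    [Algebra (ZMod p) L]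
    (hK : Fintype.card K = q) (hL : Fintype.card L = q ^ k) :
    ∀ ε : ℝ, 0 < ε → ∃ D : ℕ, ∀ d : ℕ, D ≤ d → ¬ p ∣ d →
      |(∑' g : {g : K[X] // g.natDegree = d},
            ((1 + ∑ α : L, if Algebra.trace (ZMod p) L (aeval α g.1) = 0
              then (p : ℝ) else 0 : ℝ))) /
          (Nat.card {g : K[X] // g.natDegree = d} : ℝ)
        - (if p ∣ k then (q : ℝ) ^ k + 1 + (p - 1) * (q : ℝ) ^ (k / p)
            else (q : ℝ) ^ k + 1)| < ε := by
  obtain ⟨aexp, ha, hqa⟩ := hq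
  haveI : Fact p.Prime := ⟨hp⟩
  have hq2 : 2 ≤ q := by
    rw [hqa]
    calc 2 ≤ p := hp.two_le
    _ ≤ p ^ aexp := Nat.le_self_pow ha.ne' p
  haveI : CharP K p := charP_of_card hp ha (hqa ▸ hK)
  haveI : CharP L p := charP_of_card hp (a := aexp * k) (Nat.mul_pos ha hk)
    (by rw [hL, hqa, pow_mul])
  letI : Algebra (ZMod p) K := ZMod.algebra K p
  haveI : IsScalarTower (ZMod p) K L := IsScalarTower.of_algebraMap_eq' (RingHom.ext_zmod _ _)
  have hfr : Module.finrank K L = k := by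
    have h := Module.card_eq_pow_finrank (K := K) (V := L)
    rw [hK, hL] at h
    exact Nat.pow_right_injective hq2 h.symm
  have bridge : ∀ x : L,
      (∀ b : K, Algebra.trace (ZMod p) L (b • x) = 0) ↔ Algebra.trace K L x = 0 := by
    intro x
    constructor
    · intro hb
      have hnd := traceForm_nondegenerate (ZMod p) K
      refine hnd.1 _ (fun b => ?_)
      have h1 := hb b
      rw [← Algebra.trace_trace (S := K) (b • x), LinearMap.map_smul, smul_eq_mul] at h1
      rw [Algebra.traceForm_apply, mul_comm]
      exact h1
    · intro h0 b
      rw [← Algebra.trace_trace (S := K) (b • x), LinearMap.map_smul, h0, smul_zero, map_zero]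
  intro ε hε
  refine ⟨max k 1, fun d hd _ => ?_⟩
  have hd1 : 0 < d := le_trans (le_max_right k 1) hd
  have hdk : k ≤ d := le_trans (le_max_left k 1) hd
  obtain ⟨E, hE⟩ := poly_equiv (K := K) hd1
  letI : Fintype (Polynomial.degreeLT K d) :=
    Fintype.ofEquiv _ (Polynomial.degreeLTEquiv K d).toEquiv.symm
  letI : Fintype {g : K[X] // g.natDegree = d} := Fintype.ofEquiv _ E
  set N : ℕ := (q - 1) * q ^ d with hN
  have hcard_deg : Fintype.card (Polynomial.degreeLT K d) = q ^ d := by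
    rw [Fintype.card_congr (Polynomial.degreeLTEquiv K d).toEquiv]
    simp [hK]
  have hcard_c : Fintype.card {c : K // c ≠ 0} = q - 1 := by
    rw [← Fintype.card_congr (unitsEquivNeZero (G₀ := K)), Fintype.card_units, hK]
  have hcardSub : Fintype.card {g : K[X] // g.natDegree = d} = N := by
    rw [← Fintype.card_congr E, Fintype.card_prod, hcard_c, hcard_deg]
  have hN0 : 0 < N := Nat.mul_pos (by omega) (Nat.pow_pos (n := d) (by omega))
  have hNR : (0:ℝ) < (N:ℝ) := by exact_mod_cast hN0
  have hsplit : ∀ (α : L) (x : {c : K // c ≠ 0} × Polynomial.degreeLT K d),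
      Polynomial.aeval α (E x).1
        = algebraMap K L x.1.1 * α ^ d + Polynomial.aeval α (x.2 : K[X]) := by
    intro α x
    rw [hE]
    simp [map_add, map_mul, map_pow, Polynomial.aeval_C, Polynomial.aeval_X]
  have key : ∀ α : L,
      (∑ x : {c : K // c ≠ 0} × Polynomial.degreeLT K d,
        if Algebra.trace (ZMod p) L (Polynomial.aeval α (E x).1) = 0 then (p:ℝ) else 0)
      = if (∀ i : ℕ, Algebra.trace K L (α ^ i) = 0) then ((N : ℝ) * p) else (N : ℝ) := by
    intro α
    by_cases hbad : ∀ i : ℕ, Algebra.trace K L (α ^ i) = 0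
    · rw [if_pos hbad]
      have hallzero : ∀ x : {c : K // c ≠ 0} × Polynomial.degreeLT K d,
          Algebra.trace (ZMod p) L (Polynomial.aeval α (E x).1) = 0 := by
        intro x
        rw [hsplit α x, map_add]
        have h1 : Algebra.trace (ZMod p) L (algebraMap K L x.1.1 * α ^ d) = 0 := by
          rw [← Algebra.smul_def]
          exact (bridge (α ^ d)).2 (hbad d) x.1.1
        have h2 : Algebra.trace (ZMod p) L (Polynomial.aeval α (x.2 : K[X])) = 0 := by
          rcases eq_or_ne (x.2 : K[X]) 0 with h0 | h0
          · rw [h0, map_zero, map_zero]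
          · have hnd : (x.2 : K[X]).natDegree < d :=
              (Polynomial.natDegree_lt_iff_degree_lt h0).2 (Polynomial.mem_degreeLT.1 x.2.2)
            rw [Polynomial.aeval_eq_sum_range' hnd, map_sum]
            refine Finset.sum_eq_zero fun j _ => ?_
            exact (bridge (α ^ j)).2 (hbad j) _
        rw [h1, h2, add_zero]
      rw [Finset.sum_congr rfl (fun x _ => if_pos (hallzero x)), Finset.sum_const,
        Finset.card_univ, Fintype.card_prod, hcard_c, hcard_deg, nsmul_eq_mul]
    · rw [if_neg hbad]
      push_neg at hbad
      obtain ⟨i0, hi0⟩ := hbad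
      have hex : ∃ i, i < k ∧ Algebra.trace K L (α ^ i) ≠ 0 := by
        by_contra hc
        push_neg at hc
        exact hi0 (trace_pow_all hfr hk α hc i0)
      obtain ⟨i, hik, hi⟩ := hex
      have hexb : ∃ b : K, Algebra.trace (ZMod p) L (b • α ^ i) ≠ 0 := by
        by_contra hc
        push_neg at hc
        exact hi ((bridge (α ^ i)).1 hc)
      obtain ⟨b, hb⟩ := hexb
      have hmem : (Polynomial.C b * Polynomial.X ^ i) ∈ Polynomial.degreeLT K d := by
        rw [Polynomial.mem_degreeLT]
        refine lt_of_le_of_lt (Polynomial.degree_C_mul_X_pow_le i b) ?_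
        exact_mod_cast lt_of_lt_of_le hik hdk
      set T : Polynomial.degreeLT K d →+ ZMod p :=
        AddMonoidHom.mk' (fun h => Algebra.trace (ZMod p) L (Polynomial.aeval α (h : K[X])))
          (fun x y => by
            show Algebra.trace (ZMod p) L
                (Polynomial.aeval α ((x + y : Polynomial.degreeLT K d) : K[X])) = _
            rw [Submodule.coe_add, map_add, map_add]) with hT
      have hT0 : T ⟨_, hmem⟩ ≠ 0 := by
        show Algebra.trace (ZMod p) L (Polynomial.aeval α (Polynomial.C b * Polynomial.X ^ i)) ≠ 0
        rw [map_mul, Polynomial.aeval_C, map_pow, Polynomial.aeval_X, ← Algebra.smul_def]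
        exact hb
      rw [Fintype.sum_prod_type]
      have hinner : ∀ c : {c : K // c ≠ 0},
          (∑ h : Polynomial.degreeLT K d,
            if Algebra.trace (ZMod p) L (Polynomial.aeval α (E (c, h)).1) = 0
              then (p:ℝ) else 0)
          = (q ^ d : ℝ) := by
        intro c
        have hfib := fiber_count T _ hT0
          (- Algebra.trace (ZMod p) L (algebraMap K L c.1 * α ^ d))
        have hcond : ∀ h : Polynomial.degreeLT K d,
            (Algebra.trace (ZMod p) L (Polynomial.aeval α (E (c, h)).1) = 0)
              ↔ (T h = - Algebra.trace (ZMod p) L (algebraMap K L c.1 * α ^ d)) := by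
          intro h
          rw [hsplit α (c, h), map_add]
          rw [add_comm, add_eq_zero_iff_eq_neg]
          exact Iff.rfl
        rw [Finset.sum_congr rfl (fun h _ => by rw [if_congr (hcond h) rfl rfl])]
        rw [Finset.sum_ite, Finset.sum_const_zero, add_zero, Finset.sum_const, nsmul_eq_mul]
        have hnat : ((Finset.univ.filter fun h : Polynomial.degreeLT K d =>
            T h = - Algebra.trace (ZMod p) L (algebraMap K L c.1 * α ^ d)).card * p : ℕ)
            = q ^ d := by
          rw [mul_comm, hfib, hcard_deg]
        exact_mod_cast hnat
      rw [Finset.sum_congr rfl (fun c _ => hinner c), Finset.sum_const,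
        Finset.card_univ, hcard_c, nsmul_eq_mul]
      norm_cast
  have hsum : (∑' g : {g : K[X] // g.natDegree = d},
      ((1 + ∑ α : L, if Algebra.trace (ZMod p) L (Polynomial.aeval α g.1) = 0
        then (p:ℝ) else 0 : ℝ)))
      = (N : ℝ) + ∑ α : L,
        (if (∀ i : ℕ, Algebra.trace K L (α ^ i) = 0) then ((N:ℝ) * p) else (N:ℝ)) := by
    rw [tsum_fintype]
    rw [← Equiv.sum_comp E (fun g : {g : K[X] // g.natDegree = d} =>
      (1 + ∑ α : L, if Algebra.trace (ZMod p) L (Polynomial.aeval α g.1) = 0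
        then (p:ℝ) else 0))]
    rw [Finset.sum_add_distrib, Finset.sum_const, Finset.card_univ, Fintype.card_prod,
      hcard_c, hcard_deg, nsmul_eq_mul, mul_one]
    rw [Finset.sum_comm]
    congr 1
    exact Finset.sum_congr rfl (fun α _ => key α)
  have hBc := bad_count p q k aexp ha hqa hk K L hK hL
  have hsum2 : (∑ α : L,
      (if (∀ i : ℕ, Algebra.trace K L (α ^ i) = 0) then ((N:ℝ) * p) else (N:ℝ)))
      = ((if p ∣ k then q ^ (k / p) else 0 : ℕ) : ℝ) * ((N:ℝ) * p)
        + ((q ^ k - (if p ∣ k then q ^ (k / p) else 0) : ℕ) : ℝ) * (N:ℝ) := by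
    rw [Finset.sum_ite, Finset.sum_const, Finset.sum_const, nsmul_eq_mul, nsmul_eq_mul]
    rw [hBc]
    congr 2
    have hcompl := Finset.card_filter_add_card_filter_not
      (s := (Finset.univ : Finset L))
      (p := fun α : L => ∀ i : ℕ, Algebra.trace K L (α ^ i) = 0)
    rw [Finset.card_univ, hL, hBc] at hcompl
    have : (Finset.univ.filter fun α : L =>
        ¬ ∀ i : ℕ, Algebra.trace K L (α ^ i) = 0).card
        = q ^ k - (if p ∣ k then q ^ (k / p) else 0) := by omega
    rw [this]
  rw [hsum, hsum2, Nat.card_eq_fintype_card, hcardSub]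
  have hB_le : (if p ∣ k then q ^ (k / p) else 0) ≤ q ^ k := by
    split
    · exact Nat.pow_le_pow_right (by omega) (Nat.div_le_self k p)
    · exact Nat.zero_le _
  have hfinal : ((N : ℝ) + (((if p ∣ k then q ^ (k / p) else 0 : ℕ) : ℝ) * ((N:ℝ) * p)
        + ((q ^ k - (if p ∣ k then q ^ (k / p) else 0) : ℕ) : ℝ) * (N:ℝ))) / (N:ℝ)
      - (if p ∣ k then (q : ℝ) ^ k + 1 + (p - 1) * (q : ℝ) ^ (k / p)
          else (q : ℝ) ^ k + 1) = 0 := by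
    have hNe : (N:ℝ) ≠ 0 := ne_of_gt hNR
    rw [Nat.cast_sub hB_le]
    by_cases hpk : p ∣ k
    · simp only [if_pos hpk]
      field_simp
      push_cast
      ring
    · simp only [if_neg hpk]
      field_simp
      push_cast
      ring
  rw [hfinal, abs_zero]
  exact hε
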